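/- Let p, ℓ be distinct primes with ℓ odd and p^{ℓ-1} ≢ 1 (mod ℓ²). Suppose that whenever ζ₁, ζ₂ ≠ 1 are ℓ-th roots of unity in characteristic p such that (ζ₁+1)/(ζ₂+1) is also an ℓ-th root of unity, then ζ₁ = ζ₂ or ζ₁ = ζ₂⁻¹. Then for any k ≥ 2, whenever ζ₁, ζ₂ ≠ 1 are ℓ^k-th roots of unity in characteristic p such that (ζ₁+1)/(ζ₂+1) is also an ℓ^k-th root of unity, then ζ₁ = ζ₂ or ζ₁ = ζ₂⁻¹. -/

import Mathlib

open Polynomial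

section Helpers

/-- binomial for nilpotent of square zero -/
lemma nilp_pow {R : Type*} [CommRing R] {c : R} (h : c * c = 0) :
    ∀ i : ℕ, (1 + c) ^ i = 1 + (i : R) * c := by
  intro i
  induction i with
  | zero => simp
  | succ n ih =>
      rw [pow_succ, ih]
      have key : (1 + (n : R) * c) * (1 + c)
          = 1 + ((n : R) + 1) * c + (n : R) * (c * c) := by ring
      rw [key, h]
      push_cast
      ring

/-- Geometric sum congruence: if `ℓ ∣ x - 1` then `∑_{i<ℓ} x^i ≡ ℓ mod ℓ²`. -/
lemma geom_sum_cong {ℓ : ℕ} (hl : ℓ.Prime) (hl2 : ℓ ≠ 2) {x : ℤ}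
    (hx : (ℓ : ℤ) ∣ x - 1) :
    ∃ B : ℤ, (∑ i ∈ Finset.range ℓ, x ^ i) = ℓ + ℓ ^ 2 * B := by
  obtain ⟨w, hw⟩ := hx
  have hodd : 2 ∣ ℓ - 1 := by
    obtain ⟨m, hm⟩ := hl.odd_of_ne_two hl2
    omega
  obtain ⟨h2, hh2⟩ := hodd
  have hsum : (∑ i ∈ Finset.range ℓ, i) = ℓ * h2 := by
    have := Finset.sum_range_id_mul_two ℓ
    have h' : (∑ i ∈ Finset.range ℓ, i) * 2 = ℓ * h2 * 2 := by
      rw [this]; rw [hh2]; ring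
    omega
  have key : ((∑ i ∈ Finset.range ℓ, x ^ i : ℤ) : ZMod (ℓ^2)) = ((ℓ : ℤ) : ZMod (ℓ^2)) := by
    push_cast
    have hLL : (ℓ : ZMod (ℓ^2)) * (ℓ : ZMod (ℓ^2)) = 0 := by
      have : ((ℓ^2 : ℕ) : ZMod (ℓ^2)) = 0 := ZMod.natCast_self _
      push_cast at this
      linear_combination this
    set c : ZMod (ℓ^2) := (ℓ : ZMod (ℓ^2)) * (w : ZMod (ℓ^2)) with hc
    have hcc : c * c = 0 := by
      rw [hc]
      calc (ℓ : ZMod (ℓ^2)) * (w : ZMod (ℓ^2)) * ((ℓ : ZMod (ℓ^2)) * (w : ZMod (ℓ^2)))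
          = ((ℓ : ZMod (ℓ^2)) * (ℓ : ZMod (ℓ^2))) * ((w : ZMod (ℓ^2)) * w) := by ring
        _ = 0 := by rw [hLL, zero_mul]
    have hxc : (x : ZMod (ℓ^2)) = 1 + c := by
      have : (x : ZMod (ℓ^2)) - 1 = (ℓ : ZMod (ℓ^2)) * (w : ZMod (ℓ^2)) := by
        have := congrArg (fun t : ℤ => (t : ZMod (ℓ^2))) hw
        push_cast at this
        exact this
      rw [hc]; linear_combination this
    calc (∑ i ∈ Finset.range ℓ, (x : ZMod (ℓ^2)) ^ i)
        = ∑ i ∈ Finset.range ℓ, (1 + (i : ZMod (ℓ^2)) * c) := by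
          refine Finset.sum_congr rfl fun i _ => ?_
          rw [hxc, nilp_pow hcc]
      _ = (ℓ : ZMod (ℓ^2)) + (∑ i ∈ Finset.range ℓ, (i : ZMod (ℓ^2))) * c := by
          rw [Finset.sum_add_distrib, Finset.sum_const, Finset.card_range, ← Finset.sum_mul]
          simp
      _ = (ℓ : ZMod (ℓ^2)) := by
          have : (∑ i ∈ Finset.range ℓ, (i : ZMod (ℓ^2))) = ((ℓ * h2 : ℕ) : ZMod (ℓ^2)) := by
            rw [← hsum]; push_cast; rfl
          rw [this, hc]
          push_cast
          calc (ℓ : ZMod (ℓ^2)) + (ℓ : ZMod (ℓ^2)) * (h2 : ZMod (ℓ^2)) *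
                ((ℓ : ZMod (ℓ^2)) * (w : ZMod (ℓ^2)))
              = (ℓ : ZMod (ℓ^2)) + ((ℓ : ZMod (ℓ^2)) * (ℓ : ZMod (ℓ^2))) *
                ((h2 : ZMod (ℓ^2)) * (w : ZMod (ℓ^2))) := by ring
            _ = (ℓ : ZMod (ℓ^2)) := by rw [hLL]; ring
  have hdvd : ((ℓ : ℤ)^2) ∣ (∑ i ∈ Finset.range ℓ, x ^ i) - (ℓ : ℤ) := by
    have hmod := (ZMod.intCast_eq_intCast_iff _ _ _).mp key
    have hd := Int.ModEq.dvd hmod.symm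
    have h2' : ((ℓ^2 : ℕ) : ℤ) = (ℓ : ℤ)^2 := by push_cast; ring
    rwa [h2'] at hd
  obtain ⟨B, hB⟩ := hdvd
  exact ⟨B, by linarith⟩

/-- exact power of `ℓ` dividing `p^((ℓ-1)ℓ^(m-1)) - 1` (integer version). -/
lemma NTZ {p ℓ : ℕ} (hp : p.Prime) (hl : ℓ.Prime) (hl2 : ℓ ≠ 2) (hne : p ≠ ℓ)
    (hwief : ¬ p ^ (ℓ - 1) ≡ 1 [MOD ℓ ^ 2]) :
    ∀ m, 1 ≤ m → ((ℓ : ℤ) ^ m ∣ (p : ℤ) ^ ((ℓ - 1) * ℓ ^ (m - 1)) - 1 ∧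
      ¬ (ℓ : ℤ) ^ (m + 1) ∣ (p : ℤ) ^ ((ℓ - 1) * ℓ ^ (m - 1)) - 1) := by
  haveI : Fact ℓ.Prime := ⟨hl⟩
  have hlpos : 0 < ℓ := hl.pos
  intro m hm
  induction m with
  | zero => omega
  | succ n ih =>
    rcases Nat.lt_or_ge n 1 with h1 | h1
    · -- base case : n = 0, m = 1
      have hn0 : n = 0 := by omega
      subst hn0
      norm_num
      constructor
      · -- Fermat
        have hp0 : (p : ZMod ℓ) ≠ 0 := by
          rw [Ne, ZMod.natCast_eq_zero_iff]
          intro hdvd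
          exact hne ((Nat.prime_dvd_prime_iff_eq hl hp).mp hdvd).symm
        have hfer : (p : ZMod ℓ) ^ (ℓ - 1) = 1 := ZMod.pow_card_sub_one_eq_one hp0
        have : (((p : ℤ) ^ (ℓ - 1) - 1 : ℤ) : ZMod ℓ) = 0 := by
          push_cast
          rw [hfer]
          ring
        have := (ZMod.intCast_zmod_eq_zero_iff_dvd _ _).mp this
        simpa using this
      · intro hdvd
        apply hwief
        have h1' : (1 : ℕ) ≤ p ^ (ℓ - 1) := Nat.one_le_pow _ _ hp.pos
        rw [Nat.modEq_iff_dvd]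
        push_cast
        have h2 := dvd_neg.mpr hdvd
        rw [neg_sub] at h2
        convert h2 using 2
    · obtain ⟨hd, hnd⟩ := ih h1
      set x : ℤ := (p : ℤ) ^ ((ℓ - 1) * ℓ ^ (n - 1)) with hxdef
      have hxpow : x ^ ℓ = (p : ℤ) ^ ((ℓ - 1) * ℓ ^ (n + 1 - 1)) := by
        rw [hxdef, ← pow_mul]
        congr 1
        have : ℓ ^ (n - 1) * ℓ = ℓ ^ n := by
          rw [← pow_succ]
          congr 1
          omega
        rw [Nat.add_sub_cancel, mul_assoc, this]
      have hl1 : (ℓ : ℤ) ∣ x - 1 := by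
        refine dvd_trans ?_ hd
        exact dvd_pow_self _ (by omega)
      obtain ⟨A, hA⟩ := hd
      have hlA : ¬ (ℓ : ℤ) ∣ A := by
        intro ⟨c, hc⟩
        apply hnd
        exact ⟨c, by rw [hA, hc]; ring⟩
      obtain ⟨B, hB⟩ := geom_sum_cong hl hl2 hl1
      have key : (p : ℤ) ^ ((ℓ - 1) * ℓ ^ (n + 1 - 1)) - 1
          = (ℓ : ℤ) ^ (n + 1) * ((1 + ℓ * B) * A) := by
        rw [← hxpow, ← geom_sum_mul, hB, hA]
        ring
      constructor
      · exact ⟨(1 + ℓ * B) * A, key⟩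
      · intro hdvd
        rw [key] at hdvd
        have hne0 : ((ℓ : ℤ) ^ (n + 1)) ≠ 0 := by positivity
        have hdvd2 : (ℓ : ℤ) ∣ (1 + ℓ * B) * A := by
          have : (ℓ : ℤ) ^ (n + 1 + 1) = (ℓ : ℤ) ^ (n + 1) * ℓ := by rw [pow_succ]
          rw [this] at hdvd
          exact (mul_dvd_mul_iff_left hne0).mp hdvd
        have hlprime : Prime (ℓ : ℤ) := Nat.prime_iff_prime_int.mp hl
        rcases hlprime.dvd_mul.mp hdvd2 with h | h
        · have : (ℓ : ℤ) ∣ 1 := by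
            have h' : (ℓ : ℤ) ∣ ℓ * B + 1 := by rwa [add_comm] at h
            exact (dvd_add_right (dvd_mul_right _ _)).mp h'
          have := Int.le_of_dvd one_pos this
          have := hl.two_le
          omega
        · exact hlA h

/-- natural number version -/
lemma NT {p ℓ : ℕ} (hp : p.Prime) (hl : ℓ.Prime) (hl2 : ℓ ≠ 2) (hne : p ≠ ℓ)
    (hwief : ¬ p ^ (ℓ - 1) ≡ 1 [MOD ℓ ^ 2]) :
    ∀ m, 1 ≤ m → (ℓ ^ m ∣ p ^ ((ℓ - 1) * ℓ ^ (m - 1)) - 1 ∧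
      ¬ ℓ ^ (m + 1) ∣ p ^ ((ℓ - 1) * ℓ ^ (m - 1)) - 1) := by
  intro m hm
  obtain ⟨h1, h2⟩ := NTZ hp hl hl2 hne hwief m hm
  have hq1 : (1 : ℕ) ≤ p ^ ((ℓ - 1) * ℓ ^ (m - 1)) := Nat.one_le_pow _ _ hp.pos
  have hcast : ((p ^ ((ℓ - 1) * ℓ ^ (m - 1)) - 1 : ℕ) : ℤ)
      = (p : ℤ) ^ ((ℓ - 1) * ℓ ^ (m - 1)) - 1 := by
    push_cast [hq1]
    ring
  constructor
  · have : ((ℓ ^ m : ℕ) : ℤ) ∣ ((p ^ ((ℓ - 1) * ℓ ^ (m - 1)) - 1 : ℕ) : ℤ) := by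
      rw [hcast]; push_cast; exact h1
    exact_mod_cast this
  · intro hdvd
    apply h2
    have : ((ℓ ^ (m + 1) : ℕ) : ℤ) ∣ ((p ^ ((ℓ - 1) * ℓ ^ (m - 1)) - 1 : ℕ) : ℤ) :=
      Int.natCast_dvd_natCast.mpr hdvd
    rw [hcast] at this
    push_cast at this
    exact this

/-- order-killing lemma -/
lemma L1 {M : Type*} [Monoid M] {ℓ : ℕ} (hl : ℓ.Prime) {x : M} {K j N : ℕ}
    (hx : x ^ ℓ ^ K = 1) (hN : x ^ N = 1) (h : ¬ ℓ ^ j ∣ N) : x ^ ℓ ^ (j - 1) = 1 := by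
  obtain ⟨m, hmK, hm⟩ := (Nat.dvd_prime_pow hl).mp (orderOf_dvd_of_pow_eq_one hx)
  have h2 : orderOf x ∣ N := orderOf_dvd_of_pow_eq_one hN
  have hmj : m ≤ j - 1 := by
    by_contra hc
    exact h (dvd_trans (pow_dvd_pow ℓ (by omega)) (hm ▸ h2))
  exact orderOf_dvd_iff_pow_eq_one.mp (hm ▸ pow_dvd_pow ℓ hmj)

/-- `x^q = x` when `x^n = 1` and `n ∣ q - 1`. -/
lemma pow_q {F : Type*} [Monoid F] {x : F} {n q : ℕ} (hq : 1 ≤ q) (hd : n ∣ q - 1)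
    (hx : x ^ n = 1) : x ^ q = x := by
  have h1 : x ^ (q - 1) = 1 := by
    obtain ⟨c, hc⟩ := hd
    rw [hc, pow_mul, hx, one_pow]
  calc x ^ q = x ^ (q - 1 + 1) := by rw [Nat.sub_add_cancel hq]
    _ = x := by rw [pow_succ, h1, one_mul]

section Field

variable {F : Type*} [Field F] {ℓ : ℕ}

lemma ne_zero_of_pow_eq_one {x : F} {n : ℕ} (hn : n ≠ 0) (hx : x ^ n = 1) : x ≠ 0 := by
  intro h
  rw [h, zero_pow hn] at hx
  exact zero_ne_one hx

/-- the case where exactly one of the two roots is primitive leads to a contradiction -/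
lemma caseB (hl : ℓ.Prime) {q q' k : ℕ} (hk : 1 ≤ k)
    (hq1 : 1 ≤ q) (hq'1 : 1 ≤ q')
    (hqd : ℓ ^ k ∣ q - 1) (hqnd : ¬ ℓ ^ (k + 1) ∣ q - 1)
    (hq'd : ℓ ∣ q' - 1) (hq'nd : ¬ ℓ ^ 2 ∣ q' - 1)
    (hfrobq : ∀ x y : F, (x + y) ^ q = x ^ q + y ^ q)
    (hfrobq' : ∀ x y : F, (x + y) ^ q' = x ^ q' + y ^ q')
    {ζ₁ ζ₂ η : F}
    (hz1 : ζ₁ ^ ℓ ^ (k + 1) = 1) (hη : η ^ ℓ ^ (k + 1) = 1)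
    (hprim1 : ζ₁ ^ ℓ ^ k ≠ 1) (h2 : ζ₂ ^ ℓ ^ k = 1)
    (Eq0 : ζ₁ + 1 = η * (ζ₂ + 1)) : False := by
  have hlek : ℓ ^ (k + 1) ≠ 0 := pow_ne_zero _ hl.ne_zero
  have hζ₁0 : ζ₁ ≠ 0 := ne_zero_of_pow_eq_one hlek hz1
  set α := ζ₁ ^ (q - 1) with hαdef
  set ε := η ^ (q - 1) with hεdef
  have hα1 : α ≠ 1 := by
    intro h
    apply hprim1
    have := L1 hl hz1 h hqnd
    simpa using this
  have hdvdl : ℓ ^ (k + 1) ∣ (q - 1) * ℓ := by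
    rw [pow_succ]
    exact mul_dvd_mul_right hqd ℓ
  have hαℓ : α ^ ℓ = 1 := by
    rw [hαdef, ← pow_mul]
    obtain ⟨c, hc⟩ := hdvdl
    rw [hc, pow_mul, hz1, one_pow]
  have hεℓ : ε ^ ℓ = 1 := by
    rw [hεdef, ← pow_mul]
    obtain ⟨c, hc⟩ := hdvdl
    rw [hc, pow_mul, hη, one_pow]
  have hz2q : ζ₂ ^ q = ζ₂ := pow_q hq1 hqd h2
  have hz1q : ζ₁ ^ q = α * ζ₁ := by
    rw [hαdef, ← pow_succ, Nat.sub_add_cancel hq1]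
  have hηq : η ^ q = ε * η := by
    rw [hεdef, ← pow_succ, Nat.sub_add_cancel hq1]
  have E1 : α * ζ₁ + 1 = ε * η * (ζ₂ + 1) := by
    have h' := congrArg (· ^ q) Eq0
    rw [hfrobq, mul_pow, hfrobq, one_pow, hz1q, hηq, hz2q] at h'
    linear_combination h'
  have E2 : ζ₁ * α + 1 = ε * ζ₁ + ε := by linear_combination E1 - ε * Eq0
  have hαε : α ≠ ε := by
    intro h
    apply hα1
    rw [h] at E2 ⊢
    linear_combination -E2
  have hαq' : α ^ q' = α := pow_q hq'1 hq'd hαℓ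
  have hεq' : ε ^ q' = ε := pow_q hq'1 hq'd hεℓ
  have E4 : ζ₁ ^ q' * α + 1 = ε * ζ₁ ^ q' + ε := by
    have h' := congrArg (· ^ q') E2
    rw [hfrobq', hfrobq', mul_pow, mul_pow, one_pow, hαq', hεq'] at h'
    linear_combination h'
  have hfix : ζ₁ ^ q' = ζ₁ := by
    have h5 : (ζ₁ ^ q' - ζ₁) * (α - ε) = 0 := by linear_combination E4 - E2
    rcases mul_eq_zero.mp h5 with h | h
    · exact sub_eq_zero.mp h
    · exact absurd (sub_eq_zero.mp h) hαε
  have hq'one : ζ₁ ^ (q' - 1) = 1 := by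
    have : ζ₁ ^ (q' - 1) * ζ₁ = 1 * ζ₁ := by
      rw [← pow_succ, Nat.sub_add_cancel hq'1, hfix, one_mul]
    exact mul_right_cancel₀ hζ₁0 this
  have hℓ1 : ζ₁ ^ ℓ = 1 := by
    have := L1 hl hz1 hq'one hq'nd
    simpa using this
  apply hprim1
  calc ζ₁ ^ ℓ ^ k = (ζ₁ ^ ℓ) ^ ℓ ^ (k - 1) := by
        rw [← pow_mul]
        congr 1
        rw [← pow_succ']
        congr 1
        omega
    _ = 1 := by rw [hℓ1, one_pow]

/-- the main case: both roots primitive at level `k+1` -/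
lemma stepC (hl : ℓ.Prime) (hl2 : ℓ ≠ 2) {q k : ℕ} (hk : 1 ≤ k) (hq1 : 1 ≤ q)
    (hqd : ℓ ^ k ∣ q - 1) (hqnd : ¬ ℓ ^ (k + 1) ∣ q - 1)
    (hfrobq : ∀ x y : F, (x + y) ^ q = x ^ q + y ^ q)
    {ζ₁ ζ₂ η : F}
    (hz1 : ζ₁ ^ ℓ ^ (k + 1) = 1) (hz2 : ζ₂ ^ ℓ ^ (k + 1) = 1) (hη : η ^ ℓ ^ (k + 1) = 1)
    (hprim1 : ζ₁ ^ ℓ ^ k ≠ 1) (hprim2 : ζ₂ ^ ℓ ^ k ≠ 1)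
    (Eq0 : ζ₁ + 1 = η * (ζ₂ + 1)) : ζ₁ = ζ₂ ∨ ζ₁ = ζ₂⁻¹ := by
  classical
  haveI : NeZero ℓ := ⟨hl.ne_zero⟩
  have hlek : ℓ ^ (k + 1) ≠ 0 := pow_ne_zero _ hl.ne_zero
  have hζ₁0 : ζ₁ ≠ 0 := ne_zero_of_pow_eq_one hlek hz1
  have hζ₂0 : ζ₂ ≠ 0 := ne_zero_of_pow_eq_one hlek hz2
  have hη0 : η ≠ 0 := ne_zero_of_pow_eq_one hlek hη
  obtain ⟨α, hαdef⟩ : ∃ x : F, ζ₁ ^ (q - 1) = x := ⟨_, rfl⟩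
  obtain ⟨β, hβdef⟩ : ∃ x : F, ζ₂ ^ (q - 1) = x := ⟨_, rfl⟩
  obtain ⟨ε, hεdef⟩ : ∃ x : F, η ^ (q - 1) = x := ⟨_, rfl⟩
  have hα1 : α ≠ 1 := fun h => hprim1 (by simpa using L1 hl hz1 (hαdef.symm ▸ h) hqnd)
  have hβ1 : β ≠ 1 := fun h => hprim2 (by simpa using L1 hl hz2 (hβdef.symm ▸ h) hqnd)
  have hdvdl : ℓ ^ (k + 1) ∣ (q - 1) * ℓ := by
    rw [pow_succ]; exact mul_dvd_mul_right hqd ℓ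
  have powl : ∀ x : F, x ^ ℓ ^ (k + 1) = 1 → (x ^ (q - 1)) ^ ℓ = 1 := by
    intro x hx
    rw [← pow_mul]
    obtain ⟨c, hc⟩ := hdvdl
    rw [hc, pow_mul, hx, one_pow]
  have hαℓ : α ^ ℓ = 1 := hαdef ▸ powl _ hz1
  have hβℓ : β ^ ℓ = 1 := hβdef ▸ powl _ hz2
  have hεℓ : ε ^ ℓ = 1 := hεdef ▸ powl _ hη
  -- β is a primitive ℓ-th root of unity
  have hordβ : orderOf β = ℓ := by
    rcases hl.eq_one_or_self_of_dvd _ (orderOf_dvd_of_pow_eq_one hβℓ) with h | h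
    · exact absurd (orderOf_eq_one_iff.mp h) hβ1
    · exact h
  have hβprim : IsPrimitiveRoot β ℓ :=
    ⟨hβℓ, fun l hl' => hordβ ▸ orderOf_dvd_of_pow_eq_one hl'⟩
  obtain ⟨a, ha, hba⟩ := hβprim.eq_pow_of_pow_eq_one hαℓ
  obtain ⟨e, he, hbe⟩ := hβprim.eq_pow_of_pow_eq_one hεℓ
  have ha0 : a ≠ 0 := by
    intro h
    rw [h, pow_zero] at hba
    exact hα1 hba.symm
  have hℓq : ℓ ∣ q - 1 := dvd_trans (dvd_pow_self ℓ (by omega)) hqd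
  have hαq : α ^ q = α := pow_q hq1 hℓq hαℓ
  have hβq : β ^ q = β := pow_q hq1 hℓq hβℓ
  have hεq : ε ^ q = ε := pow_q hq1 hℓq hεℓ
  have hz1q : ζ₁ ^ q = α * ζ₁ := by rw [← hαdef, ← pow_succ, Nat.sub_add_cancel hq1]
  have hz2q : ζ₂ ^ q = β * ζ₂ := by rw [← hβdef, ← pow_succ, Nat.sub_add_cancel hq1]
  have hηq : η ^ q = ε * η := by rw [← hεdef, ← pow_succ, Nat.sub_add_cancel hq1]
  -- the iterated equation
  have iter : ∀ j : ℕ, ζ₁ * α ^ j + 1 = η * ε ^ j * (ζ₂ * β ^ j + 1) := by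
    intro j
    induction j with
    | zero => simpa using Eq0
    | succ n ih =>
      have hpq : ∀ x : F, x ^ q = x → (x ^ n) ^ q = x ^ n := by
        intro x hx
        rw [← pow_mul, mul_comm, pow_mul, hx]
      have h' := congrArg (· ^ q) ih
      rw [hfrobq, mul_pow, mul_pow, one_pow, hz1q, hfrobq, mul_pow, mul_pow, one_pow,
        hz2q, hηq, hpq α hαq, hpq ε hεq, hpq β hβq] at h'
      calc ζ₁ * α ^ (n + 1) + 1 = α * ζ₁ * α ^ n + 1 := by ring
        _ = ε * η * ε ^ n * (β * ζ₂ * β ^ n + 1) := h'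
        _ = η * ε ^ (n + 1) * (ζ₂ * β ^ (n + 1) + 1) := by ring
  -- the polynomial
  set e' := (e + 1) % ℓ with he'def
  have he' : e' < ℓ := Nat.mod_lt _ hl.pos
  have hbee' : β ^ e' = β ^ (e + 1) := (pow_eq_pow_mod (e + 1) hβℓ).symm
  have he'e : e' ≠ e := by
    intro h
    rcases Nat.lt_or_ge (e + 1) ℓ with hlt | hge
    · rw [he'def] at h; rw [Nat.mod_eq_of_lt hlt] at h; omega
    · have : e + 1 = ℓ := by omega
      rw [he'def, this, Nat.mod_self] at h
      omega
  set P : Polynomial F := Polynomial.C ζ₁ * Polynomial.X ^ a + Polynomial.C 1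
      - Polynomial.C (η * ζ₂) * Polynomial.X ^ e' - Polynomial.C η * Polynomial.X ^ e
      with hPdef
  have heval : ∀ j ∈ Finset.range ℓ, P.eval (β ^ j) = 0 := by
    intro j _
    have hj := iter j
    rw [← hba, ← hbe] at hj
    have hkey : ((β ^ j) ^ e' : F) = (β ^ e) ^ j * β ^ j := by
      calc ((β ^ j) ^ e' : F) = (β ^ e') ^ j := by
            rw [← pow_mul, ← pow_mul, mul_comm]
        _ = (β ^ (e + 1)) ^ j := by rw [hbee']
        _ = (β ^ e * β) ^ j := by rw [pow_succ]
        _ = (β ^ e) ^ j * β ^ j := by rw [mul_pow]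
    rw [hPdef]
    simp only [Polynomial.eval_sub, Polynomial.eval_add, Polynomial.eval_mul,
      Polynomial.eval_pow, Polynomial.eval_C, Polynomial.eval_X]
    rw [hkey]
    have hswap1 : ((β ^ j) ^ a : F) = (β ^ a) ^ j := by
      rw [← pow_mul, ← pow_mul, mul_comm]
    have hswap2 : ((β ^ j) ^ e : F) = (β ^ e) ^ j := by
      rw [← pow_mul, ← pow_mul, mul_comm]
    rw [hswap1, hswap2]
    linear_combination hj
  have hcard : ((Finset.range ℓ).image (β ^ ·)).card = ℓ := by
    rw [Finset.card_image_of_injOn, Finset.card_range]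
    intro i hi j hj hij
    exact hβprim.pow_inj (Finset.mem_range.mp hi) (Finset.mem_range.mp hj) hij
  have hdeg : P.natDegree < ℓ := by
    have h1 : (Polynomial.C ζ₁ * Polynomial.X ^ a + Polynomial.C (1:F)).natDegree ≤ ℓ - 1 := by
      refine le_trans (Polynomial.natDegree_add_le _ _) ?_
      simp only [Polynomial.natDegree_C]
      refine max_le (le_trans (Polynomial.natDegree_C_mul_X_pow_le _ _) (by omega)) (by omega)
    have h2 : (Polynomial.C ζ₁ * Polynomial.X ^ a + Polynomial.C 1
        - Polynomial.C (η * ζ₂) * Polynomial.X ^ e').natDegree ≤ ℓ - 1 := by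
      refine le_trans (Polynomial.natDegree_sub_le _ _) ?_
      refine max_le h1 (le_trans (Polynomial.natDegree_C_mul_X_pow_le _ _) (by omega))
    have h3 : P.natDegree ≤ ℓ - 1 := by
      rw [hPdef]
      refine le_trans (Polynomial.natDegree_sub_le _ _) ?_
      refine max_le h2 (le_trans (Polynomial.natDegree_C_mul_X_pow_le _ _) (by omega))
    have := hl.two_le
    omega
  have hP0 : P = 0 := by
    refine Polynomial.eq_zero_of_natDegree_lt_card_of_eval_eq_zero' P
      ((Finset.range ℓ).image (β ^ ·)) ?_ (by rw [hcard]; exact hdeg)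
    intro x hx
    obtain ⟨j, hj, rfl⟩ := Finset.mem_image.mp hx
    exact heval j hj
  -- coefficient extraction
  have hcoeff : ∀ m : ℕ, (if a = m then ζ₁ else 0) + (if m = 0 then (1:F) else 0)
      - (if e' = m then η * ζ₂ else 0) - (if e = m then η else 0) = 0 := by
    intro m
    have := congrArg (fun Q => Polynomial.coeff Q m) hP0
    simp only [hPdef, Polynomial.coeff_sub, Polynomial.coeff_add, Polynomial.coeff_C_mul,
      Polynomial.coeff_X_pow, Polynomial.coeff_C, Polynomial.coeff_zero] at this
    simp only [mul_ite, mul_one, mul_zero] at this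
    convert this using 3 <;> simp [eq_comm]
  by_cases hecase : e = 0
  · -- η = 1, left case
    have h0 := hcoeff 0
    rw [hecase] at h0
    have he'0 : e' ≠ 0 := by
      rw [he'def, hecase]
      simp only [zero_add]
      rw [Nat.mod_eq_of_lt hl.one_lt]
      omega
    rw [if_neg (by omega : a ≠ 0), if_pos rfl, if_neg he'0, if_pos rfl] at h0
    have hη1 : η = 1 := by linear_combination -h0
    left
    have := Eq0
    rw [hη1, one_mul] at this
    exact add_right_cancel this
  · -- e ≠ 0 : right case
    have hce := hcoeff e
    rw [if_neg he'e, if_neg hecase, if_pos rfl] at hce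
    by_cases hae : a = e
    · rw [if_pos hae] at hce
      have hζ₁η : ζ₁ = η := by linear_combination hce
      have hce' := hcoeff e'
      have hae' : a ≠ e' := by rw [hae]; exact Ne.symm he'e
      rw [if_neg hae', if_pos rfl, if_neg (show ¬(e = e') from fun h => he'e h.symm)] at hce'
      by_cases he'0 : e' = 0
      · rw [if_pos he'0] at hce'
        have : η * ζ₂ = 1 := by linear_combination -hce'
        right
        rw [hζ₁η]
        exact eq_inv_of_mul_eq_one_left (by linear_combination this)
      · rw [if_neg he'0] at hce'
        exfalso
        have : η * ζ₂ = 0 := by linear_combination -hce'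
        exact (mul_ne_zero hη0 hζ₂0) this
    · rw [if_neg hae] at hce
      exfalso
      apply hη0
      linear_combination -hce

end Field

end Helpers

/-- Lifting of the root-of-unity condition from `ℓ`-th roots of unity to `ℓ^k`-th
roots of unity under the non-Wieferich condition. -/
theorem stmt15 (p ℓ : ℕ) [Fact p.Prime] (hl : ℓ.Prime) (hne : p ≠ ℓ) (hl2 : ℓ ≠ 2)
    (hwief : ¬ p ^ (ℓ - 1) ≡ 1 [MOD ℓ ^ 2])
    (h1 : ∀ ζ₁ ζ₂ : AlgebraicClosure (ZMod p), ζ₁ ≠ 1 → ζ₂ ≠ 1 →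
      ζ₁ ^ ℓ = 1 → ζ₂ ^ ℓ = 1 → ((ζ₁ + 1) / (ζ₂ + 1)) ^ ℓ = 1 → ζ₁ = ζ₂ ∨ ζ₁ = ζ₂⁻¹) :
    ∀ k, 2 ≤ k → ∀ ζ₁ ζ₂ : AlgebraicClosure (ZMod p), ζ₁ ≠ 1 → ζ₂ ≠ 1 →
      ζ₁ ^ ℓ ^ k = 1 → ζ₂ ^ ℓ ^ k = 1 → ((ζ₁ + 1) / (ζ₂ + 1)) ^ ℓ ^ k = 1 →
      ζ₁ = ζ₂ ∨ ζ₁ = ζ₂⁻¹ := by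
  have hp : p.Prime := Fact.out
  suffices H : ∀ k, 1 ≤ k → ∀ ζ₁ ζ₂ : AlgebraicClosure (ZMod p), ζ₁ ≠ 1 → ζ₂ ≠ 1 →
      ζ₁ ^ ℓ ^ k = 1 → ζ₂ ^ ℓ ^ k = 1 → ((ζ₁ + 1) / (ζ₂ + 1)) ^ ℓ ^ k = 1 →
      ζ₁ = ζ₂ ∨ ζ₁ = ζ₂⁻¹ by
    intro k hk
    exact H k (by omega)
  intro k hk
  induction k, hk using Nat.le_induction with
  | base => simpa using h1
  | succ n hn ih =>
    intro ζ₁ ζ₂ hζ₁ hζ₂ hz1 hz2 hdiv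
    have hlek : ℓ ^ (n + 1) ≠ 0 := pow_ne_zero _ hl.ne_zero
    have hη0 : ((ζ₁ + 1) / (ζ₂ + 1)) ≠ 0 := ne_zero_of_pow_eq_one hlek hdiv
    have hden : ζ₂ + 1 ≠ 0 := by
      intro h
      rw [h, div_zero] at hη0
      exact hη0 rfl
    set η := (ζ₁ + 1) / (ζ₂ + 1) with hηdef
    have Eq0 : ζ₁ + 1 = η * (ζ₂ + 1) := (div_mul_cancel₀ _ hden).symm
    obtain ⟨hqd, hqnd⟩ := NT hp hl hl2 hne hwief n hn
    have hq'pair := NT hp hl hl2 hne hwief 1 le_rfl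
    have hq'd : ℓ ∣ p ^ (ℓ - 1) - 1 := by simpa using hq'pair.1
    have hq'nd : ¬ ℓ ^ 2 ∣ p ^ (ℓ - 1) - 1 := by simpa using hq'pair.2
    have hq1 : 1 ≤ p ^ ((ℓ - 1) * ℓ ^ (n - 1)) := Nat.one_le_pow _ _ hp.pos
    have hq'1 : 1 ≤ p ^ (ℓ - 1) := Nat.one_le_pow _ _ hp.pos
    have hfrobq : ∀ x y : AlgebraicClosure (ZMod p),
        (x + y) ^ p ^ ((ℓ - 1) * ℓ ^ (n - 1)) = x ^ p ^ ((ℓ - 1) * ℓ ^ (n - 1))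
          + y ^ p ^ ((ℓ - 1) * ℓ ^ (n - 1)) := fun x y =>
      add_pow_char_pow x y p ((ℓ - 1) * ℓ ^ (n - 1))
    have hfrobq' : ∀ x y : AlgebraicClosure (ZMod p),
        (x + y) ^ p ^ (ℓ - 1) = x ^ p ^ (ℓ - 1) + y ^ p ^ (ℓ - 1) :=
      fun x y => add_pow_char_pow x y p (ℓ - 1)
    by_cases hc1 : ζ₁ ^ ℓ ^ n = 1 <;> by_cases hc2 : ζ₂ ^ ℓ ^ n = 1
    · -- case A : both non-primitive, use induction hypothesis
      have hz1q : ζ₁ ^ p ^ ((ℓ - 1) * ℓ ^ (n - 1)) = ζ₁ := pow_q hq1 hqd hc1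
      have hz2q : ζ₂ ^ p ^ ((ℓ - 1) * ℓ ^ (n - 1)) = ζ₂ := pow_q hq1 hqd hc2
      have hηq : η ^ p ^ ((ℓ - 1) * ℓ ^ (n - 1)) = η := by
        have h' := congrArg (· ^ p ^ ((ℓ - 1) * ℓ ^ (n - 1))) Eq0
        rw [hfrobq, mul_pow, hfrobq, one_pow, hz1q, hz2q] at h'
        have h'' := h'.symm.trans Eq0
        exact mul_right_cancel₀ hden h''
      have hη1 : η ^ (p ^ ((ℓ - 1) * ℓ ^ (n - 1)) - 1) = 1 := by
        have h3 : η ^ (p ^ ((ℓ - 1) * ℓ ^ (n - 1)) - 1) * η = 1 * η := by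
          rw [← pow_succ, Nat.sub_add_cancel hq1, hηq, one_mul]
        exact mul_right_cancel₀ hη0 h3
      have hηn : η ^ ℓ ^ n = 1 := by simpa using L1 hl hdiv hη1 hqnd
      exact ih ζ₁ ζ₂ hζ₁ hζ₂ hc1 hc2 hηn
    · -- ζ₁ non-primitive, ζ₂ primitive : contradiction (mirrored case B)
      exfalso
      have hEq0' : ζ₂ + 1 = η⁻¹ * (ζ₁ + 1) := by
        rw [Eq0]
        field_simp
      have hηinv : (η⁻¹) ^ ℓ ^ (n + 1) = 1 := by rw [inv_pow, hdiv, inv_one]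
      exact caseB hl hn hq1 hq'1 hqd hqnd hq'd hq'nd hfrobq hfrobq' hz2 hηinv hc2 hc1 hEq0'
    · -- ζ₁ primitive, ζ₂ non-primitive : contradiction (case B)
      exact absurd Eq0
        (fun h => caseB hl hn hq1 hq'1 hqd hqnd hq'd hq'nd hfrobq hfrobq' hz1 hdiv hc1 hc2 h)
    · -- case C
      exact stepC hl hl2 hn hq1 hqd hqnd hfrobq hz1 hz2 hdiv hc1 hc2 Eq0
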